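/- Let $\phi(\lambda)=q+d\lambda+\int_0^\infty(1-e^{-\lambda x})\Pi(dx)$ be the Laplace exponent of a subordinator with tail $\overline\Pi(x)=\Pi(x,\infty)$. The positive increase condition $\liminf_{x\to 0}\frac{x\overline\Pi(x)}{\int_0^x\overline\Pi(u)\,du}>0$ is equivalent to $\liminf_{x\to 0}\frac{\int_0^{2x}\overline\Pi(y)\,dy}{\int_0^x\overline\Pi(y)\,dy}>1$. -/

import Mathlib

open MeasureTheory Filter Real Set
open scoped ENNReal Topology

private theorem aux_main (T I : ℝ → ℝ)
    (hI : ∀ x, I x = ∫ u in Set.Ioc (0:ℝ) x, T u)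
    (hTnn : ∀ u, 0 ≤ T u)
    (hTanti : ∀ a b : ℝ, 0 < a → a ≤ b → T b ≤ T a)
    (hTint : IntegrableOn T (Set.Ioc (0:ℝ) 1))
    (hTpos : ∃ u : ℝ, 0 < u ∧ u ≤ 1 ∧ 0 < T u) :
    (0 < liminf (fun x => x * T x / I x) (𝓝[>] (0:ℝ)))
    ↔ 1 < liminf (fun x => I (2*x) / I x) (𝓝[>] (0:ℝ)) := by
  obtain ⟨u1, hu1pos, hu1le, hc0⟩ := hTpos
  have hint : ∀ x : ℝ, x ≤ 1 → IntegrableOn T (Set.Ioc 0 x) :=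
    fun x hx => hTint.mono_set (Set.Ioc_subset_Ioc_right hx)
  have hintm : ∀ a b : ℝ, 0 ≤ a → b ≤ 1 → IntegrableOn T (Set.Ioc a b) :=
    fun a b ha hb => hTint.mono_set (Set.Ioc_subset_Ioc ha hb)
  have hImono : ∀ x y : ℝ, x ≤ y → y ≤ 1 → I x ≤ I y := fun x y hxy hy => by
    rw [hI, hI]
    exact setIntegral_mono_set (hint y hy)
      (Filter.Eventually.of_forall fun u => hTnn u)
      (HasSubset.Subset.eventuallyLE (Set.Ioc_subset_Ioc_right hxy))
  have hconst : ∀ a b c : ℝ, a ≤ b → (∫ _ in Set.Ioc a b, c) = (b - a) * c := by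
    intro a b c hab
    rw [setIntegral_const, Real.volume_real_Ioc_of_le hab, smul_eq_mul]
  have hlow : ∀ x : ℝ, 0 < x → x ≤ 1 → x * T x ≤ I x := by
    intro x hx hx1
    rw [hI]
    calc x * T x = ∫ _ in Set.Ioc (0:ℝ) x, T x := by
          rw [hconst 0 x (T x) (by linarith)]; ring
      _ ≤ ∫ u in Set.Ioc (0:ℝ) x, T u :=
          setIntegral_mono_on (integrableOn_const measure_Ioc_lt_top.ne)
            (hint x hx1) measurableSet_Ioc (fun u hu => hTanti u x hu.1 hu.2)
  have hmid_le : ∀ x : ℝ, 0 < x → 2*x ≤ 1 → (∫ u in Set.Ioc x (2*x), T u) ≤ x * T x := by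
    intro x hx h2x
    calc (∫ u in Set.Ioc x (2*x), T u) ≤ ∫ _ in Set.Ioc x (2*x), T x :=
          setIntegral_mono_on (hintm x (2*x) hx.le h2x)
            (integrableOn_const measure_Ioc_lt_top.ne) measurableSet_Ioc
            (fun u hu => hTanti x u hx hu.1.le)
      _ = x * T x := by rw [hconst x (2*x) (T x) (by linarith)]; ring
  have hmid_ge : ∀ x : ℝ, 0 < x → 2*x ≤ 1 → x * T (2*x) ≤ ∫ u in Set.Ioc x (2*x), T u := by
    intro x hx h2x
    calc x * T (2*x) = ∫ _ in Set.Ioc x (2*x), T (2*x) := by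
          rw [hconst x (2*x) (T (2*x)) (by linarith)]; ring
      _ ≤ ∫ u in Set.Ioc x (2*x), T u :=
          setIntegral_mono_on (integrableOn_const measure_Ioc_lt_top.ne)
            (hintm x (2*x) hx.le h2x) measurableSet_Ioc
            (fun u hu => hTanti u (2*x) (lt_trans hx hu.1) hu.2)
  have hsplit : ∀ x : ℝ, 0 < x → 2*x ≤ 1 → I (2*x) = I x + ∫ u in Set.Ioc x (2*x), T u := by
    intro x hx h2x
    rw [hI, hI, ← setIntegral_union (Set.Ioc_disjoint_Ioc_of_le le_rfl) measurableSet_Ioc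
      (hint x (by linarith)) (hintm x (2*x) hx.le h2x),
      Set.Ioc_union_Ioc_eq_Ioc hx.le (by linarith)]
  have hIpos : ∀ x : ℝ, 0 < x → x ≤ 1 → 0 < I x := by
    intro x hx hx1
    have hy : 0 < min x u1 := lt_min hx hu1pos
    have h1 : min x u1 * T u1 ≤ min x u1 * T (min x u1) :=
      mul_le_mul_of_nonneg_left (hTanti (min x u1) u1 hy (min_le_right _ _)) hy.le
    have h2 := hlow _ hy (le_trans (min_le_left _ _) hx1)
    have h3 := hImono (min x u1) x (min_le_left _ _) hx1
    nlinarith [mul_pos hy hc0]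
  have hmem : ∀ᶠ x in 𝓝[>] (0:ℝ), x ∈ Set.Ioo (0:ℝ) (1/2) :=
    Ioo_mem_nhdsGT_of_mem ⟨le_rfl, by norm_num⟩
  have hfle : ∀ᶠ x in 𝓝[>] (0:ℝ), x * T x / I x ≤ 1 := by
    filter_upwards [hmem] with x hx
    exact (div_le_one (hIpos x hx.1 (by linarith [hx.2]))).2 (hlow x hx.1 (by linarith [hx.2]))
  have hgle : ∀ᶠ x in 𝓝[>] (0:ℝ), I (2*x) / I x ≤ 2 := by
    filter_upwards [hmem] with x hx
    have hx1 : (0:ℝ) < x := hx.1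
    have h2x : 2*x ≤ 1 := by linarith [hx.2]
    have hIx := hIpos x hx1 (by linarith)
    rw [div_le_iff₀ hIx]
    have e1 := hsplit x hx1 h2x
    have e2 := hmid_le x hx1 h2x
    have e3 := hlow x hx1 (by linarith)
    linarith
  have hbf : IsBoundedUnder (· ≥ ·) (𝓝[>] (0:ℝ)) (fun x => x * T x / I x) :=
    isBoundedUnder_of_eventually_ge (f := 𝓝[>] (0:ℝ))
      (a := (0:ℝ)) (by
        filter_upwards [hmem] with x hx
        have h1 := hIpos x hx.1 (by linarith [hx.2])
        exact div_nonneg (mul_nonneg hx.1.le (hTnn x)) h1.le)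
  have hbg : IsBoundedUnder (· ≥ ·) (𝓝[>] (0:ℝ)) (fun x => I (2*x) / I x) :=
    isBoundedUnder_of_eventually_ge (f := 𝓝[>] (0:ℝ))
      (a := (0:ℝ)) (by
        filter_upwards [hmem] with x hx
        have h1 := hIpos x hx.1 (by linarith [hx.2])
        have h2 := hIpos (2*x) (by linarith [hx.1]) (by linarith [hx.2])
        exact div_nonneg h2.le h1.le)
  have hcf : IsCoboundedUnder (· ≥ ·) (𝓝[>] (0:ℝ)) (fun x => x * T x / I x) :=
    isCoboundedUnder_ge_of_eventually_le _ hfle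
  have hcg : IsCoboundedUnder (· ≥ ·) (𝓝[>] (0:ℝ)) (fun x => I (2*x) / I x) :=
    isCoboundedUnder_ge_of_eventually_le _ hgle
  have h2map : Tendsto (fun x : ℝ => 2*x) (𝓝[>] (0:ℝ)) (𝓝[>] (0:ℝ)) := by
    rw [tendsto_nhdsWithin_iff]
    constructor
    · have h0 : Tendsto (fun x : ℝ => 2*x) (𝓝 (0:ℝ)) (𝓝 (0:ℝ)) := by
        simpa using (continuous_mul_left (2:ℝ)).tendsto (0:ℝ)
      exact h0.mono_left nhdsWithin_le_nhds
    · filter_upwards [self_mem_nhdsWithin] with x hx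
      exact mul_pos two_pos (Set.mem_Ioi.mp hx)
  constructor
  · intro h
    set L := liminf (fun x => x * T x / I x) (𝓝[>] (0:ℝ)) with hL
    have hc : ∀ᶠ x in 𝓝[>] (0:ℝ), L/2 < x * T x / I x :=
      eventually_lt_of_lt_liminf (by linarith) hbf
    have hc2 : ∀ᶠ x in 𝓝[>] (0:ℝ), L/2 < (2*x) * T (2*x) / I (2*x) := h2map.eventually hc
    have key : ∀ᶠ x in 𝓝[>] (0:ℝ), 1 + L/4 ≤ I (2*x) / I x := by
      filter_upwards [hmem, hc2] with x hx hcx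
      have hx1 : (0:ℝ) < x := hx.1
      have h2x : 2*x ≤ 1 := by linarith [hx.2]
      have hIx := hIpos x hx1 (by linarith)
      have hI2x := hIpos (2*x) (by linarith) h2x
      rw [lt_div_iff₀ hI2x] at hcx
      rw [le_div_iff₀ hIx]
      have h1 := hImono x (2*x) (by linarith) h2x
      have h2 := hmid_ge x hx1 h2x
      have h3 := hsplit x hx1 h2x
      have h4 : L/2 * I x ≤ L/2 * I (2*x) := mul_le_mul_of_nonneg_left h1 (by linarith)
      nlinarith
    have hfin := le_liminf_of_le hcg key
    linarith
  · intro h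
    set M := liminf (fun x => I (2*x) / I x) (𝓝[>] (0:ℝ)) with hM
    have hb : ∀ᶠ x in 𝓝[>] (0:ℝ), (1+M)/2 < I (2*x) / I x :=
      eventually_lt_of_lt_liminf (by linarith) hbg
    have key : ∀ᶠ x in 𝓝[>] (0:ℝ), (M-1)/2 ≤ x * T x / I x := by
      filter_upwards [hmem, hb] with x hx hbx
      have hx1 : (0:ℝ) < x := hx.1
      have h2x : 2*x ≤ 1 := by linarith [hx.2]
      have hIx := hIpos x hx1 (by linarith)
      rw [lt_div_iff₀ hIx] at hbx
      rw [le_div_iff₀ hIx]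
      have h2 := hmid_le x hx1 h2x
      have h3 := hsplit x hx1 h2x
      linarith
    have hfin := le_liminf_of_le hcf key
    linarith

theorem stmt2 (Pim : Measure ℝ) (hsupp : ∀ᵐ x ∂Pim, 0 < x)
    (hint : ∫⁻ x, ENNReal.ofReal (min 1 x) ∂Pim ≠ ∞) :
    (0 < liminf (fun x =>
        x * (Pim (Set.Ioi x)).toReal / ∫ u in Set.Ioc (0:ℝ) x, (Pim (Set.Ioi u)).toReal)
      (𝓝[>] (0:ℝ)))
    ↔ 1 < liminf (fun x =>
        (∫ u in Set.Ioc (0:ℝ) (2*x), (Pim (Set.Ioi u)).toReal)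
          / ∫ u in Set.Ioc (0:ℝ) x, (Pim (Set.Ioi u)).toReal)
      (𝓝[>] (0:ℝ)) := by
  have gmono : Antitone (fun u : ℝ => Pim (Set.Ioi u)) :=
    fun a b hab => measure_mono (Set.Ioi_subset_Ioi hab)
  have gmeas : Measurable (fun u : ℝ => Pim (Set.Ioi u)) := gmono.measurable
  have hTfin : ∀ a : ℝ, 0 < a → Pim (Set.Ioi a) ≠ ∞ := by
    intro a ha htop
    apply hint
    have hc : ENNReal.ofReal (min 1 a) ≠ 0 := by
      simp only [ne_eq, ENNReal.ofReal_eq_zero, not_le]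
      exact lt_min one_pos ha
    have hle : ENNReal.ofReal (min 1 a) * Pim (Set.Ioi a)
        ≤ ∫⁻ x, ENNReal.ofReal (min 1 x) ∂Pim := by
      calc ENNReal.ofReal (min 1 a) * Pim (Set.Ioi a)
          = ∫⁻ _ in Set.Ioi a, ENNReal.ofReal (min 1 a) ∂Pim := (setLIntegral_const _ _).symm
        _ ≤ ∫⁻ x in Set.Ioi a, ENNReal.ofReal (min 1 x) ∂Pim :=
            setLIntegral_mono (ENNReal.measurable_ofReal.comp (measurable_const.min measurable_id)) fun x hx =>
              ENNReal.ofReal_le_ofReal (min_le_min le_rfl hx.le)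
        _ ≤ ∫⁻ x, ENNReal.ofReal (min 1 x) ∂Pim := setLIntegral_le_lintegral _ _
    rw [htop, ENNReal.mul_top hc] at hle
    exact top_le_iff.mp hle
  have hfin1 : ∫⁻ u in Set.Ioc (0:ℝ) 1, Pim (Set.Ioi u) ≠ ∞ := by
    have hnn : 0 ≤ᵐ[Pim] fun x => min 1 x := by
      filter_upwards [hsupp] with x hx
      exact le_min zero_le_one hx.le
    have key := lintegral_eq_lintegral_meas_le Pim hnn
      (measurable_const.min measurable_id).aemeasurable
    have hmble : Measurable (fun t : ℝ => Pim {a : ℝ | t ≤ min 1 a}) := by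
      apply Antitone.measurable
      intro s t hst
      exact measure_mono fun a ha => le_trans hst ha
    have hle : ∫⁻ u in Set.Ioc (0:ℝ) 1, Pim (Set.Ioi u)
        ≤ ∫⁻ x, ENNReal.ofReal (min 1 x) ∂Pim := by
      rw [key]
      calc ∫⁻ u in Set.Ioc (0:ℝ) 1, Pim (Set.Ioi u)
          ≤ ∫⁻ u in Set.Ioc (0:ℝ) 1, Pim {a : ℝ | u ≤ min 1 a} := by
            apply setLIntegral_mono hmble
            intro u hu
            exact measure_mono fun x hx => le_min hu.2 (le_of_lt hx)
        _ ≤ ∫⁻ t in Set.Ioi (0:ℝ), Pim {a : ℝ | t ≤ min 1 a} :=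
            lintegral_mono_set Set.Ioc_subset_Ioi_self
    exact ne_top_of_le_ne_top hint hle
  have hTint : IntegrableOn (fun u : ℝ => (Pim (Set.Ioi u)).toReal) (Set.Ioc (0:ℝ) 1) := by
    refine ⟨(gmeas.ennreal_toReal).aestronglyMeasurable.restrict, ?_⟩
    rw [hasFiniteIntegral_iff_ofReal (Filter.Eventually.of_forall fun u => ENNReal.toReal_nonneg)]
    calc ∫⁻ u in Set.Ioc (0:ℝ) 1, ENNReal.ofReal (Pim (Set.Ioi u)).toReal
        ≤ ∫⁻ u in Set.Ioc (0:ℝ) 1, Pim (Set.Ioi u) :=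
          lintegral_mono fun u => ENNReal.ofReal_toReal_le
      _ < ∞ := lt_top_iff_ne_top.2 hfin1
  by_cases hdeg : ∀ u : ℝ, 0 < u → Pim (Set.Ioi u) = 0
  · have hiz : ∀ x : ℝ, 0 < x → (∫ u in Set.Ioc (0:ℝ) x, (Pim (Set.Ioi u)).toReal) = 0 := by
      intro x hx
      rw [setIntegral_congr_fun measurableSet_Ioc
        (fun u hu => by simp [hdeg u hu.1] : Set.EqOn (fun u : ℝ => (Pim (Set.Ioi u)).toReal)
          (fun _ => (0:ℝ)) (Set.Ioc 0 x))]
      simp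
    have hf0 : ∀ᶠ x in 𝓝[>] (0:ℝ),
        x * (Pim (Set.Ioi x)).toReal / ∫ u in Set.Ioc (0:ℝ) x, (Pim (Set.Ioi u)).toReal
          = (0:ℝ) := by
      filter_upwards [self_mem_nhdsWithin] with x hx
      simp [hdeg x hx]
    have hg0 : ∀ᶠ x in 𝓝[>] (0:ℝ),
        (∫ u in Set.Ioc (0:ℝ) (2*x), (Pim (Set.Ioi u)).toReal)
          / (∫ u in Set.Ioc (0:ℝ) x, (Pim (Set.Ioi u)).toReal) = (0:ℝ) := by
      filter_upwards [self_mem_nhdsWithin] with x hx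
      rw [hiz (2*x) (mul_pos two_pos hx), zero_div]
    rw [liminf_congr hf0, liminf_congr hg0, liminf_const]
    norm_num
  · push_neg at hdeg
    obtain ⟨u0, hu0pos, hu0ne⟩ := hdeg
    exact aux_main (fun u : ℝ => (Pim (Set.Ioi u)).toReal)
      (fun x : ℝ => ∫ u in Set.Ioc (0:ℝ) x, (Pim (Set.Ioi u)).toReal)
      (fun x => rfl) (fun u => ENNReal.toReal_nonneg)
      (fun a b ha hab => ENNReal.toReal_mono (hTfin a ha)
        (measure_mono (Set.Ioi_subset_Ioi hab)))
      hTint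
      ⟨min u0 1, lt_min hu0pos one_pos, min_le_right _ _,
        ENNReal.toReal_pos
          (fun h0 => hu0ne (measure_mono_null (Set.Ioi_subset_Ioi (min_le_left _ _)) h0))
          (hTfin _ (lt_min hu0pos one_pos))⟩
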